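/- Lemma 2.5 of Section 2 (estimate of I₃ for q > 2). Let n ≥ 1, q > 2, s ∈ (0,1), κ ∈ [0,1), 1 ≤ ρ₁ < ρ₂ ≤ 2, an integer m ≥ 3, m₁ > 0 and H > 0. Set ρ̃ = (ρ₂ − ρ₁)/4 and ψ(x) = ((|x|² − ρ₁²)₊)^m. Let u : ℝⁿ → ℝ be measurable with |u(x) − u(y)| ≤ H|x − y|^κ for all x, y in the closed ball B̄_{ρ₂}(0). Let x̄ ∈ B_{(ρ₁+ρ₂)/2}(0) and ȳ ∈ B_{(3ρ₂+ρ₁)/4}(0) with ā := x̄ − ȳ satisfying 0 < |ā| < ρ̃/2, and assume (i) u(x̄+z) − u(ȳ+z) − m₁ψ(x̄+z) ≤ u(x̄) − u(ȳ) − m₁ψ(x̄) for all z ∈ ℝⁿ, and (ii) m₁ψ(x̄) ≤ u(x̄) − u(ȳ). Let ε₁ ∈ (0, 1/8), η = ε₁|ā|, and let D ⊆ B_{ρ̃}(0) \ B_η(0) be measurable. Then there is a constant κ* > 0, depending only on n, q, s, κ, m, m₁ and H (and not on ε₁, |ā| or D), such that ∫_D (J_q(u(x̄) − u(x̄+z))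 − J_q(u(ȳ) − u(ȳ+z))) |z|^{−(n+sq)} dz ≥ −κ* ( ∫_η^{ρ̃} r^{κ(q−2)+1−sq} dr + |ā|^{κ(m−1)/m} ∫_η^{ρ̃} r^{κ(q−2)−sq} dr ). -/

import Mathlib

open MeasureTheory Metric Filter

noncomputable section

/-- `J_q(t) = |t|^{q-2} t`. -/
def Jq (q t : ℝ) : ℝ := |t| ^ (q - 2) * t

/-- The localization function `ψ(x) = ((|x|² − ρ₁²)₊)^m`. -/
def locPsi (n : ℕ) (ρ₁ : ℝ) (m : ℕ) (x : EuclideanSpace ℝ (Fin n)) : ℝ :=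
  (max (‖x‖ ^ 2 - ρ₁ ^ 2) 0) ^ m



lemma measurable_rpow_const_of_nonneg {α : Type*} [MeasurableSpace α] {f : α → ℝ}
    (hf : Measurable f) (hf0 : ∀ x, 0 ≤ f x) (t : ℝ) :
    Measurable fun x => f x ^ t := by
  have heq : (fun x => f x ^ t) = fun x =>
      if f x = 0 then (if t = 0 then 1 else 0) else Real.exp (Real.log (f x) * t) := by
    ext x
    rcases eq_or_ne (f x) 0 with h | h
    · rw [h]
      rcases eq_or_ne t 0 with ht | ht
      · simp [ht]
      · simp [Real.zero_rpow ht, ht, h]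
    · rw [if_neg h, Real.rpow_def_of_pos (lt_of_le_of_ne (hf0 x) (Ne.symm h))]
  rw [heq]
  exact Measurable.ite (hf (measurableSet_singleton 0)) measurable_const
    (Real.measurable_exp.comp ((Real.measurable_log.comp hf).mul measurable_const))


lemma Jq_nonneg_eq {q : ℝ} (hq : 2 < q) {t : ℝ} (ht : 0 ≤ t) : Jq q t = t ^ (q - 1) := by
  rcases eq_or_lt_of_le ht with h | h
  · simp [Jq, ← h, Real.zero_rpow (by linarith : q - 1 ≠ 0),
      Real.zero_rpow (by linarith : q - 2 ≠ 0)]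
  · rw [Jq, abs_of_nonneg ht, ← Real.rpow_add_one h.ne' (q - 2)]
    congr 1; ring

lemma Jq_neg (q t : ℝ) : Jq q (-t) = - Jq q t := by
  simp [Jq]

lemma Jq_mono {q : ℝ} (hq : 2 < q) : Monotone (Jq q) := by
  intro a b hab
  have h2 : (0:ℝ) ≤ q - 2 := by linarith
  rcases le_total 0 a with ha | ha
  · have hb : 0 ≤ b := ha.trans hab
    rw [Jq_nonneg_eq hq ha, Jq_nonneg_eq hq hb]
    exact Real.rpow_le_rpow ha hab (by linarith)
  · rcases le_total 0 b with hb | hb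
    · have h1 : Jq q a ≤ 0 := by
        rw [Jq]
        exact mul_nonpos_of_nonneg_of_nonpos (Real.rpow_nonneg (abs_nonneg a) _) ha
      have h2 : 0 ≤ Jq q b := by
        rw [Jq]
        exact mul_nonneg (Real.rpow_nonneg (abs_nonneg b) _) hb
      linarith
    · have := Real.rpow_le_rpow (by linarith : (0:ℝ) ≤ -b) (by linarith : -b ≤ -a)
        (by linarith : (0:ℝ) ≤ q - 1)
      have ea := Jq_nonneg_eq hq (by linarith : (0:ℝ) ≤ -a)
      have eb := Jq_nonneg_eq hq (by linarith : (0:ℝ) ≤ -b)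
      rw [Jq_neg] at ea eb
      linarith

lemma rpow_sub_rpow_le {q : ℝ} (hq : 2 < q) {a b : ℝ} (ha : 0 ≤ a) (hab : a ≤ b) :
    b ^ (q - 1) - a ^ (q - 1) ≤ (q - 1) * b ^ (q - 2) * (b - a) := by
  rcases eq_or_lt_of_le hab with h | h
  · subst h; simp
  · have hb : 0 < b := lt_of_le_of_lt ha h
    have hba : b - a ≠ 0 := sub_ne_zero.mpr h.ne'
    have hcont : ContinuousOn (fun x : ℝ => x ^ (q - 1)) (Set.Icc a b) := by
      have : Continuous fun x : ℝ => x ^ (q - 1) :=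
        continuous_iff_continuousAt.2 fun x =>
          (Real.hasDerivAt_rpow_const (Or.inr (by linarith : (1:ℝ) ≤ q - 1))).continuousAt
      exact this.continuousOn
    have hderiv : ∀ x ∈ Set.Ioo a b,
        HasDerivAt (fun x : ℝ => x ^ (q - 1)) ((q - 1) * x ^ (q - 1 - 1)) x := fun x _ =>
      Real.hasDerivAt_rpow_const (Or.inr (by linarith : (1:ℝ) ≤ q - 1))
    obtain ⟨c, hc, hceq⟩ := exists_hasDerivAt_eq_slope (fun x : ℝ => x ^ (q - 1))
      _ h hcont hderiv
    have hc0 : 0 ≤ c := le_trans ha hc.1.le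
    have hcb : c ≤ b := hc.2.le
    have hmon : c ^ (q - 1 - 1) ≤ b ^ (q - 2) := by
      have : q - 1 - 1 = q - 2 := by ring
      rw [this]
      exact Real.rpow_le_rpow hc0 hcb (by linarith)
    rw [eq_div_iff hba] at hceq
    rw [← hceq]
    exact mul_le_mul_of_nonneg_right
      (mul_le_mul_of_nonneg_left hmon (by linarith : (0:ℝ) ≤ q - 1))
      (by linarith : (0:ℝ) ≤ b - a)

lemma Jq_sub_le {q : ℝ} (hq : 2 < q) (a b : ℝ) :
    Jq q b - Jq q a ≤ (q - 1) * (max |a| |b|) ^ (q - 2) * max (b - a) 0 := by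
  set M := max |a| |b| with hM
  have hM0 : 0 ≤ M := le_trans (abs_nonneg a) (le_max_left _ _)
  have hMrp : 0 ≤ M ^ (q - 2) := Real.rpow_nonneg hM0 _
  rcases le_total b a with hba | hab
  · have h1 : Jq q b - Jq q a ≤ 0 := by linarith [Jq_mono hq hba]
    have h2 : (0:ℝ) ≤ (q - 1) * M ^ (q - 2) * max (b - a) 0 := by
      apply mul_nonneg (mul_nonneg (by linarith) hMrp) (le_max_right _ _)
    linarith
  · have hmax : max (b - a) 0 = b - a := max_eq_left (by linarith)
    rw [hmax]
    rcases le_total 0 a with ha | ha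
    · -- 0 ≤ a ≤ b
      have hb : 0 ≤ b := ha.trans hab
      rw [Jq_nonneg_eq hq ha, Jq_nonneg_eq hq hb]
      have h1 := rpow_sub_rpow_le hq ha hab
      have h2 : b ^ (q - 2) ≤ M ^ (q - 2) := by
        apply Real.rpow_le_rpow hb _ (by linarith)
        exact le_trans (le_abs_self b) (le_max_right _ _)
      calc b ^ (q - 1) - a ^ (q - 1) ≤ (q - 1) * b ^ (q - 2) * (b - a) := h1
        _ ≤ (q - 1) * M ^ (q - 2) * (b - a) :=
            mul_le_mul_of_nonneg_right
              (mul_le_mul_of_nonneg_left h2 (by linarith : (0:ℝ) ≤ q - 1))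
              (by linarith : (0:ℝ) ≤ b - a)
    · rcases le_total b 0 with hb | hb
      · -- a ≤ b ≤ 0
        have h1 := rpow_sub_rpow_le hq (by linarith : (0:ℝ) ≤ -b)
          (by linarith : -b ≤ -a)
        rw [show -a - -b = b - a by ring] at h1
        have ea := Jq_nonneg_eq hq (by linarith : (0:ℝ) ≤ -a)
        have eb := Jq_nonneg_eq hq (by linarith : (0:ℝ) ≤ -b)
        rw [Jq_neg] at ea eb
        have h2 : (-a) ^ (q - 2) ≤ M ^ (q - 2) := by
          apply Real.rpow_le_rpow (by linarith) _ (by linarith)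
          rw [hM, ← abs_of_nonpos ha]
          exact le_max_left _ _
        have h3 : (q - 1) * (-a) ^ (q - 2) * (b - a) ≤ (q - 1) * M ^ (q - 2) * (b - a) :=
          mul_le_mul_of_nonneg_right
            (mul_le_mul_of_nonneg_left h2 (by linarith : (0:ℝ) ≤ q - 1))
            (by linarith : (0:ℝ) ≤ b - a)
        linarith
      · -- a ≤ 0 ≤ b
        have ea := Jq_nonneg_eq hq (by linarith : (0:ℝ) ≤ -a)
        rw [Jq_neg] at ea
        rw [Jq_nonneg_eq hq hb]
        have hbq : b ^ (q - 1) = b ^ (q - 2) * b := by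
          rcases eq_or_lt_of_le hb with h | h
          · rw [← h]
            simp [Real.zero_rpow (by linarith : q - 1 ≠ 0)]
          · rw [← Real.rpow_add_one h.ne' (q - 2)]; congr 1; ring
        have haq : (-a) ^ (q - 1) = (-a) ^ (q - 2) * (-a) := by
          rcases eq_or_lt_of_le (by linarith : (0:ℝ) ≤ -a) with h | h
          · rw [← h]
            simp [Real.zero_rpow (by linarith : q - 1 ≠ 0)]
          · rw [← Real.rpow_add_one h.ne' (q - 2)]; congr 1; ring
        have h2 : b ^ (q - 2) ≤ M ^ (q - 2) :=
          Real.rpow_le_rpow hb (le_trans (le_abs_self b) (le_max_right _ _)) (by linarith)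
        have h3 : (-a) ^ (q - 2) ≤ M ^ (q - 2) := by
          apply Real.rpow_le_rpow (by linarith) _ (by linarith)
          rw [hM, ← abs_of_nonpos ha]
          exact le_max_left _ _
        -- Jq b - Jq a = b^{q-1} + (-a)^{q-1} ≤ M^{q-2}(b - a) ≤ (q-1) M^{q-2}(b-a)
        have key : b ^ (q - 1) + (-a) ^ (q - 1) ≤ M ^ (q - 2) * (b - a) := by
          rw [hbq, haq]
          nlinarith
        have hq1 : (1:ℝ) ≤ q - 1 := by linarith
        have hX : (0:ℝ) ≤ M ^ (q - 2) * (b - a) :=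
          mul_nonneg hMrp (by linarith)
        have h4 : M ^ (q - 2) * (b - a) ≤ (q - 1) * (M ^ (q - 2) * (b - a)) :=
          le_mul_of_one_le_left hX hq1
        nlinarith [key, ea, h4]

lemma Jq_abs_le {q : ℝ} (hq : 2 < q) (t : ℝ) : |Jq q t| = |t| ^ (q - 1) := by
  rw [Jq, abs_mul, abs_of_nonneg (Real.rpow_nonneg (abs_nonneg t) _)]
  rcases eq_or_ne t 0 with h | h
  · simp [h, Real.zero_rpow (by linarith : q - 1 ≠ 0), Real.zero_rpow (by linarith : q - 2 ≠ 0)]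
  · rw [← Real.rpow_add_one (abs_ne_zero.mpr h) (q - 2)]; congr 1; ring



/-- The key pointwise estimate on the numerator. -/
lemma num_bound {q κ m₁ H Cm c a b w ψx ψxz e : ℝ}
    (hq : 2 < q) (hκ0 : 0 ≤ κ) (hm₁ : 0 < m₁) (hH : 0 < H) (hCm0 : 0 < Cm)
    (hw0 : 0 < w)
    (hax : |a| ≤ H * w ^ κ) (hbx : |b| ≤ H * w ^ κ)
    (hba : b - a ≤ m₁ * (ψxz - ψx))
    (hψ : ψxz - ψx ≤ Cm * (ψx ^ e * w + w ^ 2))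
    (hψxc : ψx ^ e ≤ c) (hc0 : 0 ≤ c) :
    Jq q b - Jq q a ≤ ((q - 1) * H ^ (q - 2) * m₁ * Cm) *
      (w ^ (κ * (q - 2) + 2) + c * w ^ (κ * (q - 2) + 1)) := by
  have hwnn : 0 ≤ w := hw0.le
  have hMrp : (max |a| |b|) ^ (q - 2) ≤ H ^ (q - 2) * w ^ (κ * (q - 2)) := by
    calc (max |a| |b|) ^ (q - 2) ≤ (H * w ^ κ) ^ (q - 2) :=
        Real.rpow_le_rpow (le_trans (abs_nonneg a) (le_max_left _ _))
          (max_le hax hbx) (by linarith)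
      _ = H ^ (q - 2) * w ^ (κ * (q - 2)) := by
          rw [Real.mul_rpow hH.le (Real.rpow_nonneg hwnn κ), ← Real.rpow_mul hwnn]
  have hP0 : 0 ≤ m₁ * Cm * (c * w + w ^ 2) := by
    apply mul_nonneg (mul_nonneg hm₁.le hCm0.le)
    have h1 := mul_nonneg hc0 hwnn
    nlinarith [sq_nonneg w]
  have hbap : max (b - a) 0 ≤ m₁ * Cm * (c * w + w ^ 2) := by
    apply max_le _ hP0
    calc b - a ≤ m₁ * (ψxz - ψx) := hba
      _ ≤ m₁ * (Cm * (ψx ^ e * w + w ^ 2)) := mul_le_mul_of_nonneg_left hψ hm₁.le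
      _ ≤ m₁ * (Cm * (c * w + w ^ 2)) := by
          apply mul_le_mul_of_nonneg_left _ hm₁.le
          apply mul_le_mul_of_nonneg_left _ hCm0.le
          exact add_le_add_left (mul_le_mul_of_nonneg_right hψxc hwnn) _
      _ = m₁ * Cm * (c * w + w ^ 2) := by ring
  have step := Jq_sub_le hq a b
  have step2 : (q - 1) * (max |a| |b|) ^ (q - 2) * max (b - a) 0
      ≤ (q - 1) * (H ^ (q - 2) * w ^ (κ * (q - 2))) * (m₁ * Cm * (c * w + w ^ 2)) := by
    apply mul_le_mul
    · exact mul_le_mul_of_nonneg_left hMrp (by linarith)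
    · exact hbap
    · exact le_max_right _ _
    · apply mul_nonneg (by linarith)
      exact mul_nonneg (Real.rpow_nonneg hH.le _) (Real.rpow_nonneg hwnn _)
  have e1 : w ^ (κ * (q - 2) + 1) = w ^ (κ * (q - 2)) * w := Real.rpow_add_one hw0.ne' _
  have e2 : w ^ (κ * (q - 2) + 2) = w ^ (κ * (q - 2)) * w ^ 2 := by
    rw [show κ * (q - 2) + 2 = (κ * (q - 2) + 1) + 1 by ring, Real.rpow_add_one hw0.ne', e1]
    ring
  have eqn : (q - 1) * (H ^ (q - 2) * w ^ (κ * (q - 2))) * (m₁ * Cm * (c * w + w ^ 2))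
      = ((q - 1) * H ^ (q - 2) * m₁ * Cm) * (w ^ (κ * (q - 2) + 2) + c * w ^ (κ * (q - 2) + 1)) := by
    rw [e1, e2]
    ring
  calc Jq q b - Jq q a ≤ (q - 1) * (max |a| |b|) ^ (q - 2) * max (b - a) 0 := step
    _ ≤ (q - 1) * (H ^ (q - 2) * w ^ (κ * (q - 2))) * (m₁ * Cm * (c * w + w ^ 2)) := step2
    _ = ((q - 1) * H ^ (q - 2) * m₁ * Cm) *
        (w ^ (κ * (q - 2) + 2) + c * w ^ (κ * (q - 2) + 1)) := eqn



lemma two_term_pow (k : ℕ) {a b : ℝ} (ha : 0 ≤ a) (hb : 0 ≤ b) :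
    (a + b) ^ k ≤ 2 ^ k * (a ^ k + b ^ k) := by
  have h1 : a + b ≤ 2 * max a b := by
    rcases le_total a b with h | h
    · rw [max_eq_right h]; linarith
    · rw [max_eq_left h]; linarith
  calc (a + b) ^ k ≤ (2 * max a b) ^ k := by
        apply pow_le_pow_left₀ (by linarith) h1
    _ = 2 ^ k * (max a b) ^ k := mul_pow 2 _ k
    _ ≤ 2 ^ k * (a ^ k + b ^ k) := by
        apply mul_le_mul_of_nonneg_left _ (by positivity)
        rcases le_total a b with h | h
        · rw [max_eq_right h]; nlinarith [pow_nonneg ha k]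
        · rw [max_eq_left h]; nlinarith [pow_nonneg hb k]

lemma pow_sub_pow_le_of_le {g h : ℝ} (hh : 0 ≤ h) (hg : h ≤ g) (m : ℕ) :
    g ^ m - h ^ m ≤ (m : ℝ) * g ^ (m - 1) * (g - h) := by
  have hg0 : 0 ≤ g := hh.trans hg
  rw [← geom_sum₂_mul g h m]
  have hsum : (∑ i ∈ Finset.range m, g ^ i * h ^ (m - 1 - i)) ≤ (m : ℝ) * g ^ (m - 1) := by
    calc (∑ i ∈ Finset.range m, g ^ i * h ^ (m - 1 - i))
        ≤ ∑ _i ∈ Finset.range m, g ^ (m - 1) := by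
          apply Finset.sum_le_sum
          intro i hi
          have hi' : i < m := Finset.mem_range.mp hi
          have h1 : h ^ (m - 1 - i) ≤ g ^ (m - 1 - i) := pow_le_pow_left₀ hh hg _
          have h2 : g ^ i * h ^ (m - 1 - i) ≤ g ^ i * g ^ (m - 1 - i) :=
            mul_le_mul_of_nonneg_left h1 (pow_nonneg hg0 i)
          rw [← pow_add] at h2
          have : i + (m - 1 - i) = m - 1 := by omega
          rwa [this] at h2
      _ = (m : ℝ) * g ^ (m - 1) := by
          rw [Finset.sum_const, Finset.card_range, nsmul_eq_mul]
  exact mul_le_mul_of_nonneg_right hsum (by linarith)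

lemma locPsi_sub_le (n : ℕ) (m : ℕ) (hm : 2 ≤ m) (ρ₁ : ℝ)
    (x z : EuclideanSpace ℝ (Fin n)) (hx : ‖x‖ ≤ 2) (hz : ‖z‖ ≤ 1) :
    locPsi n ρ₁ m (x + z) - locPsi n ρ₁ m x ≤
      (m : ℝ) * 10 ^ m *
        ((locPsi n ρ₁ m x) ^ (((m : ℝ) - 1) / (m : ℝ)) * ‖z‖ + ‖z‖ ^ 2) := by
  have hm0 : (m : ℝ) ≠ 0 := by positivity
  set Z := ‖z‖ with hZ
  have hZ0 : 0 ≤ Z := norm_nonneg z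
  set h := max (‖x‖ ^ 2 - ρ₁ ^ 2) 0 with hh_def
  set g := max (‖x + z‖ ^ 2 - ρ₁ ^ 2) 0 with hg_def
  have hh : 0 ≤ h := le_max_right _ _
  have hg : 0 ≤ g := le_max_right _ _
  -- key geometric fact
  have hgh : g ≤ h + 5 * Z := by
    apply max_le _ (by linarith)
    have hn : ‖x + z‖ ≤ ‖x‖ + ‖z‖ := norm_add_le x z
    have h1 : ‖x + z‖ ^ 2 ≤ (‖x‖ + ‖z‖) ^ 2 := by
      apply pow_le_pow_left₀ (norm_nonneg _) hn
    have h2 : ‖x‖ ^ 2 - ρ₁ ^ 2 ≤ h := le_max_left _ _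
    nlinarith [norm_nonneg x, norm_nonneg z]
  -- rpow identity : (h^m)^((m-1)/m) = h^(m-1)
  have hPP : (h ^ m : ℝ) ^ (((m : ℝ) - 1) / (m : ℝ)) = h ^ (m - 1) := by
    rw [← Real.rpow_natCast h m, ← Real.rpow_mul hh]
    have : (m : ℝ) * (((m : ℝ) - 1) / (m : ℝ)) = ((m - 1 : ℕ) : ℝ) := by
      rw [Nat.cast_sub (by omega : 1 ≤ m), Nat.cast_one]
      field_simp
    rw [this, Real.rpow_natCast]
  have hRHS0 : 0 ≤ (h ^ m : ℝ) ^ (((m : ℝ) - 1) / (m : ℝ)) :=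
    Real.rpow_nonneg (pow_nonneg hh m) _
  show g ^ m - h ^ m ≤ (m : ℝ) * 10 ^ m * ((h ^ m : ℝ) ^ (((m : ℝ) - 1) / (m : ℝ)) * Z + Z ^ 2)
  rcases le_total g h with hgle | hgle
  · have h1 : g ^ m - h ^ m ≤ 0 := by
      have := pow_le_pow_left₀ hg hgle m
      linarith
    have h2 : (0:ℝ) ≤ (m : ℝ) * 10 ^ m * ((h ^ m : ℝ) ^ (((m : ℝ) - 1) / (m : ℝ)) * Z + Z ^ 2) := by
      apply mul_nonneg (by positivity)
      have := mul_nonneg hRHS0 hZ0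
      nlinarith [sq_nonneg Z]
    linarith
  · obtain ⟨m', rfl⟩ : ∃ m', m = m' + 1 := ⟨m - 1, by omega⟩
    have key := pow_sub_pow_le_of_le hh hgle (m' + 1)
    simp only [Nat.add_sub_cancel] at key
    have hgm1 : g ^ m' ≤ 2 ^ m' * (h ^ m' + (5 * Z) ^ m') := by
      calc g ^ m' ≤ (h + 5 * Z) ^ m' := pow_le_pow_left₀ hg hgh _
        _ ≤ 2 ^ m' * (h ^ m' + (5 * Z) ^ m') := two_term_pow m' hh (by linarith)
    have hsub : g - h ≤ 5 * Z := by linarith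
    have hsub0 : (0:ℝ) ≤ g - h := by linarith
    have main : g ^ (m' + 1) - h ^ (m' + 1) ≤
        ((m' + 1 : ℕ) : ℝ) * (2 ^ m' * (h ^ m' + (5 * Z) ^ m')) * (5 * Z) := by
      calc g ^ (m' + 1) - h ^ (m' + 1) ≤ ((m' + 1 : ℕ) : ℝ) * g ^ m' * (g - h) := key
        _ ≤ ((m' + 1 : ℕ) : ℝ) * (2 ^ m' * (h ^ m' + (5 * Z) ^ m')) * (5 * Z) := by
            apply mul_le_mul
            · exact mul_le_mul_of_nonneg_left hgm1 (by positivity)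
            · exact hsub
            · exact hsub0
            · positivity
    simp only [Nat.add_sub_cancel] at hPP
    rw [hPP]
    have hZm2 : Z ^ (m' + 1) ≤ Z ^ 2 := pow_le_pow_of_le_one hZ0 hz hm
    have c1 : (2:ℝ) ^ m' * 5 ^ (m' + 1) ≤ 10 ^ (m' + 1) := by
      have h10 : (10:ℝ) ^ (m' + 1) = 2 ^ (m' + 1) * 5 ^ (m' + 1) := by
        rw [← mul_pow]; norm_num
      rw [h10]
      apply mul_le_mul_of_nonneg_right _ (by positivity)
      exact pow_le_pow_right₀ (by norm_num) (by omega)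
    have c2 : (5:ℝ) * 2 ^ m' ≤ 10 ^ (m' + 1) := by
      have h10 : (10:ℝ) ^ (m' + 1) = 5 ^ (m' + 1) * 2 ^ (m' + 1) := by
        rw [← mul_pow]; norm_num
      have h5 : (5:ℝ) ≤ 5 ^ (m' + 1) := le_self_pow₀ (by norm_num) (by omega)
      have h2' : (2:ℝ) ^ m' ≤ 2 ^ (m' + 1) := pow_le_pow_right₀ (by norm_num) (by omega)
      nlinarith [pow_nonneg (by norm_num : (0:ℝ) ≤ 2) m',
        pow_nonneg (by norm_num : (0:ℝ) ≤ 5) (m' + 1)]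
    have hmc : (0:ℝ) ≤ ((m' + 1 : ℕ) : ℝ) := by positivity
    calc g ^ (m' + 1) - h ^ (m' + 1)
        ≤ ((m' + 1 : ℕ) : ℝ) * (2 ^ m' * (h ^ m' + (5 * Z) ^ m')) * (5 * Z) := main
      _ = (5 * 2 ^ m') * (((m' + 1 : ℕ) : ℝ) * (h ^ m' * Z))
          + (2 ^ m' * 5 ^ (m' + 1)) * (((m' + 1 : ℕ) : ℝ) * Z ^ (m' + 1)) := by
          rw [mul_pow]; ring
      _ ≤ (10 ^ (m' + 1)) * (((m' + 1 : ℕ) : ℝ) * (h ^ m' * Z))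
          + (10 ^ (m' + 1)) * (((m' + 1 : ℕ) : ℝ) * Z ^ (m' + 1)) := by
          apply add_le_add
          · apply mul_le_mul_of_nonneg_right c2
            exact mul_nonneg hmc (mul_nonneg (pow_nonneg hh m') hZ0)
          · apply mul_le_mul_of_nonneg_right c1
            exact mul_nonneg hmc (pow_nonneg hZ0 _)
      _ ≤ (10 ^ (m' + 1)) * (((m' + 1 : ℕ) : ℝ) * (h ^ m' * Z))
          + (10 ^ (m' + 1)) * (((m' + 1 : ℕ) : ℝ) * Z ^ 2) := by
          have : ((m' + 1 : ℕ) : ℝ) * Z ^ (m' + 1) ≤ ((m' + 1 : ℕ) : ℝ) * Z ^ 2 :=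
            mul_le_mul_of_nonneg_left hZm2 hmc
          have h10 : (0:ℝ) ≤ (10:ℝ) ^ (m' + 1) := by positivity
          nlinarith [mul_le_mul_of_nonneg_left this h10]
      _ = ((m' + 1 : ℕ) : ℝ) * 10 ^ (m' + 1) * (h ^ m' * Z + Z ^ 2) := by ring


lemma annulus_integral_eq (n : ℕ) (hn : 1 ≤ n) (t η ρ : ℝ) (hη : 0 < η) (hηρ : η ≤ ρ) :
    ∫ z in (ball (0 : EuclideanSpace ℝ (Fin n)) ρ \ ball 0 η), ‖z‖ ^ t
      = ((n : ℝ) * (volume (ball (0 : EuclideanSpace ℝ (Fin n)) 1)).toReal)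
        * ∫ r in η..ρ, r ^ ((n : ℝ) - 1 + t) := by
  haveI : Nonempty (Fin n) := ⟨⟨0, hn⟩⟩
  haveI : Nontrivial (EuclideanSpace ℝ (Fin n)) := by
    infer_instance
  set E := EuclideanSpace ℝ (Fin n)
  have hdim : Module.finrank ℝ E = n := finrank_euclideanSpace_fin
  set f : ℝ → ℝ := (Set.Ico η ρ).indicator (fun r => r ^ t) with hf
  have hset : ball (0 : E) ρ \ ball 0 η = (fun z : E => ‖z‖) ⁻¹' (Set.Ico η ρ) := by
    ext z
    simp [mem_ball_zero_iff, Set.mem_Ico, not_lt, and_comm]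
  have step1 : ∫ z in (ball (0 : E) ρ \ ball 0 η), ‖z‖ ^ t = ∫ z : E, f ‖z‖ := by
    have hind : ∀ z : E, f ‖z‖
        = Set.indicator ((fun z : E => ‖z‖) ⁻¹' (Set.Ico η ρ)) (fun z : E => ‖z‖ ^ t) z := by
      intro z
      by_cases h : ‖z‖ ∈ Set.Ico η ρ <;>
        simp [hf, Set.indicator, h]
    have hS : MeasurableSet ((fun z : E => ‖z‖) ⁻¹' (Set.Ico η ρ)) :=
      measurable_norm (α := E) measurableSet_Ico
    rw [hset]
    calc ∫ z in ((fun z : E => ‖z‖) ⁻¹' (Set.Ico η ρ)), ‖z‖ ^ t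
        = ∫ z : E, Set.indicator ((fun z : E => ‖z‖) ⁻¹' (Set.Ico η ρ))
            (fun z : E => ‖z‖ ^ t) z := (integral_indicator hS).symm
      _ = ∫ z : E, f ‖z‖ :=
          integral_congr_ae (Eventually.of_forall fun z => (hind z).symm)
  rw [step1, integral_fun_norm_addHaar volume f, hdim]
  have step3 : ∫ y in Set.Ioi (0:ℝ), y ^ (n - 1) • f y = ∫ r in η..ρ, r ^ ((n : ℝ) - 1 + t) := by
    have hind2 : ∀ y : ℝ, y ^ (n - 1) • f y
        = (Set.Ico η ρ).indicator (fun r => r ^ (n - 1) * r ^ t) y := by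
      intro y
      by_cases h : y ∈ Set.Ico η ρ <;> simp [hf, Set.indicator, h]
    rw [integral_congr_ae (Eventually.of_forall fun y => hind2 y)]
    rw [setIntegral_indicator measurableSet_Ico]
    have hinter : Set.Ioi (0:ℝ) ∩ Set.Ico η ρ = Set.Ico η ρ := by
      apply Set.inter_eq_self_of_subset_right
      intro r hr
      exact lt_of_lt_of_le hη hr.1
    rw [hinter]
    have hcongr : ∫ r in Set.Ico η ρ, r ^ (n - 1) * r ^ t
        = ∫ r in Set.Ico η ρ, r ^ ((n : ℝ) - 1 + t) := by
      apply setIntegral_congr_fun measurableSet_Ico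
      intro r hr
      have hr0 : 0 < r := lt_of_lt_of_le hη hr.1
      show r ^ (n - 1) * r ^ t = r ^ ((n : ℝ) - 1 + t)
      rw [Real.rpow_add hr0, ← Real.rpow_natCast r (n - 1), Nat.cast_sub hn, Nat.cast_one]
    rw [hcongr, intervalIntegral.integral_of_le hηρ, MeasureTheory.integral_Ico_eq_integral_Ioo,
      MeasureTheory.integral_Ioc_eq_integral_Ioo]
  rw [step3, nsmul_eq_mul, smul_eq_mul, measureReal_def]
  ring

set_option maxHeartbeats 2000000 in
/-- **Lemma 2.5 of Section 2** (estimate of `I₃` for `q > 2`). -/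
theorem I3_estimate_q_gt_two
    (n : ℕ) (hn : 1 ≤ n) (q s κ : ℝ) (m : ℕ) (m₁ H : ℝ)
    (hq : 2 < q) (hs : s ∈ Set.Ioo (0 : ℝ) 1) (hκ : κ ∈ Set.Ico (0 : ℝ) 1)
    (hm : 3 ≤ m) (hm₁ : 0 < m₁) (hH : 0 < H) :
    ∃ κs > (0 : ℝ), ∀ ρ₁ ρ₂ : ℝ, 1 ≤ ρ₁ → ρ₁ < ρ₂ → ρ₂ ≤ 2 →
      ∀ u : EuclideanSpace ℝ (Fin n) → ℝ, Measurable u →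
      (∀ x ∈ closedBall (0 : EuclideanSpace ℝ (Fin n)) ρ₂,
        ∀ y ∈ closedBall (0 : EuclideanSpace ℝ (Fin n)) ρ₂,
          |u x - u y| ≤ H * ‖x - y‖ ^ κ) →
      ∀ xbar ∈ ball (0 : EuclideanSpace ℝ (Fin n)) ((ρ₁ + ρ₂) / 2),
      ∀ ybar ∈ ball (0 : EuclideanSpace ℝ (Fin n)) ((3 * ρ₂ + ρ₁) / 4),
        xbar - ybar ≠ 0 → ‖xbar - ybar‖ < (ρ₂ - ρ₁) / 8 →
        (∀ z : EuclideanSpace ℝ (Fin n),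
          u (xbar + z) - u (ybar + z) - m₁ * locPsi n ρ₁ m (xbar + z) ≤
            u xbar - u ybar - m₁ * locPsi n ρ₁ m xbar) →
        m₁ * locPsi n ρ₁ m xbar ≤ u xbar - u ybar →
        ∀ ε₁ ∈ Set.Ioo (0 : ℝ) (1 / 8),
        ∀ D : Set (EuclideanSpace ℝ (Fin n)), MeasurableSet D →
          D ⊆ ball (0 : EuclideanSpace ℝ (Fin n)) ((ρ₂ - ρ₁) / 4) \
                ball (0 : EuclideanSpace ℝ (Fin n)) (ε₁ * ‖xbar - ybar‖) →
          IntegrableOn (fun z =>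
              (Jq q (u xbar - u (xbar + z)) - Jq q (u ybar - u (ybar + z))) /
                ‖z‖ ^ ((n : ℝ) + s * q)) D ∧
          -(κs * ((∫ r in (ε₁ * ‖xbar - ybar‖)..((ρ₂ - ρ₁) / 4),
                r ^ (κ * (q - 2) + 1 - s * q)) +
              ‖xbar - ybar‖ ^ (κ * ((m : ℝ) - 1) / (m : ℝ)) *
                ∫ r in (ε₁ * ‖xbar - ybar‖)..((ρ₂ - ρ₁) / 4),
                  r ^ (κ * (q - 2) - s * q)))
            ≤ ∫ z in D,
                (Jq q (u xbar - u (xbar + z)) - Jq q (u ybar - u (ybar + z))) /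
                  ‖z‖ ^ ((n : ℝ) + s * q) := by
  obtain ⟨hs0, hs1⟩ := hs
  obtain ⟨hκ0, hκ1⟩ := hκ
  have hmR : (3:ℝ) ≤ (m : ℝ) := by exact_mod_cast hm
  have he0 : 0 ≤ ((m : ℝ) - 1) / (m : ℝ) := by
    apply div_nonneg <;> linarith only [hmR]
  set K₁ : ℝ := (H / m₁) ^ (((m : ℝ) - 1) / (m : ℝ)) with hK₁_def
  set Cm : ℝ := (m : ℝ) * 10 ^ m with hCm_def
  set cn : ℝ := (n : ℝ) * (volume (ball (0 : EuclideanSpace ℝ (Fin n)) 1)).toReal with hcn_def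
  set K₂ : ℝ := (q - 1) * H ^ (q - 2) * m₁ * Cm with hK₂_def
  have hK₁0 : 0 ≤ K₁ := Real.rpow_nonneg (by positivity) _
  have hCm0 : 0 < Cm := by rw [hCm_def]; positivity
  have hK₂0 : 0 ≤ K₂ := by
    rw [hK₂_def]
    exact mul_nonneg (mul_nonneg (mul_nonneg (by linarith) (Real.rpow_nonneg hH.le _))
      hm₁.le) hCm0.le
  have hcn0 : 0 ≤ cn := by rw [hcn_def]; positivity
  refine ⟨K₂ * cn * (1 + K₁) + 1,
    by nlinarith [mul_nonneg (mul_nonneg hK₂0 hcn0) (by linarith : (0:ℝ) ≤ 1 + K₁)], ?_⟩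
  intro ρ₁ ρ₂ hρ₁ hρ₁₂ hρ₂ u hu hHold xbar hxmem ybar hymem hne hdist hcomp hpsi ε₁ hε₁ D
    hDmeas hDsub
  -- basic abbreviations
  set A : ℝ := ‖xbar - ybar‖ with hA_def
  have hA0 : 0 < A := by rw [hA_def]; exact norm_pos_iff.mpr hne
  set ρt : ℝ := (ρ₂ - ρ₁) / 4 with hρt_def
  set η : ℝ := ε₁ * A with hη_def
  obtain ⟨hε₁0, hε₁8⟩ := hε₁
  have hρt0 : 0 < ρt := by rw [hρt_def]; linarith only [hρ₁₂]
  have hρt4 : ρt ≤ 1 / 4 := by rw [hρt_def]; linarith only [hρ₁, hρ₂]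
  have hη0 : 0 < η := by rw [hη_def]; exact mul_pos hε₁0 hA0
  have hAρt : A < ρt / 2 := by rw [hρt_def]; linarith only [hdist]
  have hηρt : η < ρt := by
    have h1 : η < A := by
      rw [hη_def]
      have h2 := mul_lt_mul_of_pos_right hε₁8 hA0
      linarith only [h2, hA0]
    linarith only [h1, hAρt, hρt0]
  set Ann : Set (EuclideanSpace ℝ (Fin n)) := ball 0 ρt \ ball 0 η with hAnn_def
  have hAnnMeas : MeasurableSet Ann := measurableSet_ball.diff measurableSet_ball
  have hannfin : volume Ann ≠ ⊤ := by
    apply ne_of_lt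
    apply lt_of_le_of_lt (measure_mono (Set.diff_subset))
    exact measure_ball_lt_top
  have hzAnn : ∀ z ∈ Ann, η ≤ ‖z‖ ∧ ‖z‖ < ρt := by
    intro z hz
    rw [hAnn_def] at hz
    constructor
    · have := hz.2
      rw [mem_ball_zero_iff] at this
      exact not_lt.mp this
    · have := hz.1
      rwa [mem_ball_zero_iff] at this
  -- closed ball memberships
  have hxn : ‖xbar‖ < (ρ₁ + ρ₂) / 2 := mem_ball_zero_iff.mp hxmem
  have hyn : ‖ybar‖ < (3 * ρ₂ + ρ₁) / 4 := mem_ball_zero_iff.mp hymem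
  have hxcb : xbar ∈ closedBall (0 : EuclideanSpace ℝ (Fin n)) ρ₂ :=
    mem_closedBall_zero_iff.mpr (by linarith only [hxn, hρ₁₂, hρ₁])
  have hycb : ybar ∈ closedBall (0 : EuclideanSpace ℝ (Fin n)) ρ₂ :=
    mem_closedBall_zero_iff.mpr (by linarith only [hyn, hρ₁₂, hρ₁])
  have hxzcb : ∀ z ∈ Ann, xbar + z ∈ closedBall (0 : EuclideanSpace ℝ (Fin n)) ρ₂ := by
    intro z hz
    obtain ⟨_, hz2⟩ := hzAnn z hz
    rw [hρt_def] at hz2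
    apply mem_closedBall_zero_iff.mpr
    calc ‖xbar + z‖ ≤ ‖xbar‖ + ‖z‖ := norm_add_le _ _
      _ ≤ ρ₂ := by linarith only [hxn, hz2, hρ₁₂]
  have hyzcb : ∀ z ∈ Ann, ybar + z ∈ closedBall (0 : EuclideanSpace ℝ (Fin n)) ρ₂ := by
    intro z hz
    obtain ⟨_, hz2⟩ := hzAnn z hz
    rw [hρt_def] at hz2
    apply mem_closedBall_zero_iff.mpr
    calc ‖ybar + z‖ ≤ ‖ybar‖ + ‖z‖ := norm_add_le _ _
      _ ≤ ρ₂ := by linarith only [hyn, hz2, hρ₁₂]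
  -- the integrand and the comparison function
  set F : EuclideanSpace ℝ (Fin n) → ℝ := fun z =>
    (Jq q (u xbar - u (xbar + z)) - Jq q (u ybar - u (ybar + z))) /
      ‖z‖ ^ ((n : ℝ) + s * q) with hF_def
  set t₁ : ℝ := κ * (q - 2) + 2 - ((n : ℝ) + s * q) with ht₁_def
  set t₂ : ℝ := κ * (q - 2) + 1 - ((n : ℝ) + s * q) with ht₂_def
  set c : ℝ := K₁ * A ^ (κ * (((m : ℝ) - 1) / (m : ℝ))) with hc_def
  have hc0 : 0 ≤ c := by
    rw [hc_def]
    exact mul_nonneg hK₁0 (Real.rpow_nonneg hA0.le _)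
  set G : EuclideanSpace ℝ (Fin n) → ℝ := fun z =>
    K₂ * (‖z‖ ^ t₁ + c * ‖z‖ ^ t₂) with hG_def
  have hG0 : ∀ z, 0 ≤ G z := by
    intro z
    rw [hG_def]
    exact mul_nonneg hK₂0 (add_nonneg (Real.rpow_nonneg (norm_nonneg z) _)
      (mul_nonneg hc0 (Real.rpow_nonneg (norm_nonneg z) _)))
  -- measurability
  have hJqm : Measurable (Jq q) := by
    unfold Jq
    exact (measurable_rpow_const_of_nonneg measurable_abs (fun x => abs_nonneg x) (q - 2)).mul
      measurable_id
  have hnormp : ∀ t : ℝ, Measurable fun z : EuclideanSpace ℝ (Fin n) => ‖z‖ ^ t := fun t =>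
    measurable_rpow_const_of_nonneg measurable_norm (fun z => norm_nonneg z) t
  have hFmeas : Measurable F := by
    rw [hF_def]
    apply Measurable.div
    · exact (hJqm.comp (measurable_const.sub (hu.comp (measurable_id.const_add xbar)))).sub
        (hJqm.comp (measurable_const.sub (hu.comp (measurable_id.const_add ybar))))
    · exact hnormp _
  -- integrability of rpow powers of the norm on the annulus
  have hwfacts : ∀ z ∈ Ann, 0 < ‖z‖ ∧ ‖z‖ ≤ 1 := by
    intro z hz
    obtain ⟨hz1, hz2⟩ := hzAnn z hz
    exact ⟨lt_of_lt_of_le hη0 hz1, by linarith only [hz2, hρt4]⟩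
  have hwt : ∀ t : ℝ, ∀ z ∈ Ann, ‖z‖ ^ t ≤ η ^ t + 1 := by
    intro t z hz
    obtain ⟨hz1, _⟩ := hzAnn z hz
    obtain ⟨hw0, hw1⟩ := hwfacts z hz
    rcases le_total t 0 with ht | ht
    · have h1 : ‖z‖ ^ t ≤ η ^ t := Real.rpow_le_rpow_of_nonpos hη0 hz1 ht
      linarith only [h1]
    · have h1 : ‖z‖ ^ t ≤ 1 := Real.rpow_le_one (norm_nonneg z) hw1 ht
      have h2 : 0 ≤ η ^ t := Real.rpow_nonneg hη0.le t
      linarith only [h1, h2]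
  have hIntRpow : ∀ t : ℝ, IntegrableOn
      (fun z : EuclideanSpace ℝ (Fin n) => ‖z‖ ^ t) Ann := by
    intro t
    apply Measure.integrableOn_of_bounded (M := η ^ t + 1) hannfin
      (hnormp t).aestronglyMeasurable
    rw [ae_restrict_iff' hAnnMeas]
    filter_upwards with z hz
    rw [Real.norm_eq_abs, abs_of_nonneg (Real.rpow_nonneg (norm_nonneg z) t)]
    exact hwt t z hz
  have hGintAnn : IntegrableOn G Ann := by
    rw [hG_def]
    exact (((hIntRpow t₁).add ((hIntRpow t₂).const_mul c)).const_mul K₂)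
  have hGintD : IntegrableOn G D := hGintAnn.mono_set hDsub
  -- uniform bound for F on the annulus, giving integrability
  have hFbdd : ∀ z ∈ Ann, ‖F z‖ ≤ 2 * H ^ (q - 1) / η ^ ((n : ℝ) + s * q) := by
    intro z hz
    obtain ⟨hz1, _⟩ := hzAnn z hz
    obtain ⟨hw0, hw1⟩ := hwfacts z hz
    have hax : |u xbar - u (xbar + z)| ≤ H * ‖z‖ ^ κ := by
      have := hHold xbar hxcb (xbar + z) (hxzcb z hz)
      rwa [show xbar - (xbar + z) = -z by abel, norm_neg] at this
    have hbx : |u ybar - u (ybar + z)| ≤ H * ‖z‖ ^ κ := by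
      have := hHold ybar hycb (ybar + z) (hyzcb z hz)
      rwa [show ybar - (ybar + z) = -z by abel, norm_neg] at this
    have hzκ : ‖z‖ ^ κ ≤ 1 := Real.rpow_le_one (norm_nonneg z) hw1 hκ0
    have haH : |u xbar - u (xbar + z)| ≤ H :=
      le_trans hax (mul_le_of_le_one_right hH.le hzκ)
    have hbH : |u ybar - u (ybar + z)| ≤ H :=
      le_trans hbx (mul_le_of_le_one_right hH.le hzκ)
    have hnum : |Jq q (u xbar - u (xbar + z)) - Jq q (u ybar - u (ybar + z))|
        ≤ 2 * H ^ (q - 1) := by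
      have h1 := Jq_abs_le hq (u xbar - u (xbar + z))
      have h2 := Jq_abs_le hq (u ybar - u (ybar + z))
      have h3 : |u xbar - u (xbar + z)| ^ (q - 1) ≤ H ^ (q - 1) :=
        Real.rpow_le_rpow (abs_nonneg _) haH (by linarith)
      have h4 : |u ybar - u (ybar + z)| ^ (q - 1) ≤ H ^ (q - 1) :=
        Real.rpow_le_rpow (abs_nonneg _) hbH (by linarith)
      calc |Jq q (u xbar - u (xbar + z)) - Jq q (u ybar - u (ybar + z))|
          ≤ |Jq q (u xbar - u (xbar + z))| + |Jq q (u ybar - u (ybar + z))| := abs_sub _ _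
        _ ≤ 2 * H ^ (q - 1) := by rw [h1, h2]; linarith only [h3, h4]
    have hden : η ^ ((n : ℝ) + s * q) ≤ ‖z‖ ^ ((n : ℝ) + s * q) := by
      apply Real.rpow_le_rpow hη0.le hz1
      have h5 : (1:ℝ) ≤ (n : ℝ) := by exact_mod_cast hn
      have h6 : 0 < s * q := mul_pos hs0 (by linarith only [hq])
      linarith only [h5, h6]
    have hdenpos : 0 < η ^ ((n : ℝ) + s * q) := Real.rpow_pos_of_pos hη0 _
    rw [hF_def]
    rw [Real.norm_eq_abs, abs_div, abs_of_nonneg (Real.rpow_nonneg (norm_nonneg z) _)]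
    apply div_le_div₀ (by positivity) hnum hdenpos hden
  have hFintAnn : IntegrableOn F Ann := by
    apply Measure.integrableOn_of_bounded hannfin hFmeas.aestronglyMeasurable
    rw [ae_restrict_iff' hAnnMeas]
    filter_upwards with z hz
    exact hFbdd z hz
  have hFintD : IntegrableOn F D := hFintAnn.mono_set hDsub
  -- pointwise lower bound on the annulus
  have hFG : ∀ z ∈ Ann, -G z ≤ F z := by
    intro z hz
    obtain ⟨hz1, hz2⟩ := hzAnn z hz
    obtain ⟨hw0, hw1⟩ := hwfacts z hz
    have hax : |u xbar - u (xbar + z)| ≤ H * ‖z‖ ^ κ := by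
      have := hHold xbar hxcb (xbar + z) (hxzcb z hz)
      rwa [show xbar - (xbar + z) = -z by abel, norm_neg] at this
    have hbx : |u ybar - u (ybar + z)| ≤ H * ‖z‖ ^ κ := by
      have := hHold ybar hycb (ybar + z) (hyzcb z hz)
      rwa [show ybar - (ybar + z) = -z by abel, norm_neg] at this
    have hba : (u ybar - u (ybar + z)) - (u xbar - u (xbar + z))
        ≤ m₁ * (locPsi n ρ₁ m (xbar + z) - locPsi n ρ₁ m xbar) := by
      have h7 := hcomp z
      linarith only [h7]
    have hψ := locPsi_sub_le n m (by omega) ρ₁ xbar z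
      (by linarith only [hxn, hρ₁₂, hρ₂]) hw1
    rw [← hCm_def] at hψ
    have hψx : (locPsi n ρ₁ m xbar) ^ (((m : ℝ) - 1) / (m : ℝ)) ≤ c := by
      have h3 : u xbar - u ybar ≤ H * A ^ κ := by
        have h4 := hHold xbar hxcb ybar hycb
        rw [← hA_def] at h4
        exact le_trans (le_abs_self _) h4
      have h1 : locPsi n ρ₁ m xbar ≤ (H / m₁) * (A ^ κ) := by
        rw [div_mul_eq_mul_div, le_div_iff₀ hm₁]
        linarith only [hpsi, h3]
      have h0 : 0 ≤ locPsi n ρ₁ m xbar := pow_nonneg (le_max_right _ _) m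
      calc (locPsi n ρ₁ m xbar) ^ (((m : ℝ) - 1) / (m : ℝ))
          ≤ ((H / m₁) * (A ^ κ)) ^ (((m : ℝ) - 1) / (m : ℝ)) :=
            Real.rpow_le_rpow h0 h1 he0
        _ = c := by
            rw [hc_def, hK₁_def,
              Real.mul_rpow (by positivity) (Real.rpow_nonneg hA0.le κ),
              ← Real.rpow_mul hA0.le]
    have hnum := num_bound hq hκ0 hm₁ hH hCm0 hw0 hax hbx hba hψ hψx hc0
    rw [← hK₂_def] at hnum
    have hNpos : 0 < ‖z‖ ^ ((n : ℝ) + s * q) := Real.rpow_pos_of_pos hw0 _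
    have ht1e : ‖z‖ ^ t₁ = ‖z‖ ^ (κ * (q - 2) + 2) / ‖z‖ ^ ((n : ℝ) + s * q) := by
      rw [ht₁_def]
      exact Real.rpow_sub hw0 _ _
    have ht2e : ‖z‖ ^ t₂ = ‖z‖ ^ (κ * (q - 2) + 1) / ‖z‖ ^ ((n : ℝ) + s * q) := by
      rw [ht₂_def]
      exact Real.rpow_sub hw0 _ _
    have hNpos' : 0 < ‖z‖ ^ ((n : ℝ) + s * q) := Real.rpow_pos_of_pos hw0 _
    have hGeq : -G z = (-(K₂ * (‖z‖ ^ (κ * (q - 2) + 2) + c * ‖z‖ ^ (κ * (q - 2) + 1))))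
        / ‖z‖ ^ ((n : ℝ) + s * q) := by
      simp only [hG_def]
      rw [ht1e, ht2e]
      field_simp
    rw [hGeq, hF_def]
    exact (div_le_div_iff_of_pos_right hNpos).mpr (by linarith only [hnum])
  -- integral comparison
  have hmono1 : - ∫ z in D, G z ≤ ∫ z in D, F z := by
    rw [← integral_neg]
    exact setIntegral_mono_on hGintD.neg hFintD hDmeas (fun z hz => hFG z (hDsub hz))
  have hmono2 : ∫ z in D, G z ≤ ∫ z in Ann, G z :=
    setIntegral_mono_set hGintAnn (ae_of_all _ hG0) (HasSubset.Subset.eventuallyLE hDsub)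
  -- compute the annulus integral via polar coordinates
  have hIntEq : ∀ t : ℝ, ∫ z in Ann, ‖z‖ ^ t
      = cn * ∫ r in η..ρt, r ^ ((n : ℝ) - 1 + t) := by
    intro t
    rw [hAnn_def, hcn_def]
    exact annulus_integral_eq n hn t η ρt hη0 hηρt.le
  have hGAnnval : ∫ z in Ann, G z
      = K₂ * (cn * (∫ r in η..ρt, r ^ (κ * (q - 2) + 1 - s * q))
          + c * (cn * ∫ r in η..ρt, r ^ (κ * (q - 2) - s * q))) := by
    have hadd : ∫ z in Ann, (‖z‖ ^ t₁ + c * ‖z‖ ^ t₂)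
        = (∫ z in Ann, ‖z‖ ^ t₁) + ∫ z in Ann, c * ‖z‖ ^ t₂ :=
      integral_add (hIntRpow t₁) ((hIntRpow t₂).const_mul c)
    calc ∫ z in Ann, G z = ∫ z in Ann, K₂ * (‖z‖ ^ t₁ + c * ‖z‖ ^ t₂) := by rw [hG_def]
      _ = K₂ * ∫ z in Ann, (‖z‖ ^ t₁ + c * ‖z‖ ^ t₂) := integral_const_mul K₂ _
      _ = K₂ * ((∫ z in Ann, ‖z‖ ^ t₁) + ∫ z in Ann, c * ‖z‖ ^ t₂) := by rw [hadd]
      _ = K₂ * ((∫ z in Ann, ‖z‖ ^ t₁) + c * ∫ z in Ann, ‖z‖ ^ t₂) := by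
          rw [integral_const_mul c]
      _ = K₂ * (cn * (∫ r in η..ρt, r ^ (κ * (q - 2) + 1 - s * q))
          + c * (cn * ∫ r in η..ρt, r ^ (κ * (q - 2) - s * q))) := by
          rw [hIntEq t₁, hIntEq t₂, ht₁_def, ht₂_def,
            show (n : ℝ) - 1 + (κ * (q - 2) + 2 - ((n : ℝ) + s * q))
              = κ * (q - 2) + 1 - s * q by ring,
            show (n : ℝ) - 1 + (κ * (q - 2) + 1 - ((n : ℝ) + s * q))
              = κ * (q - 2) - s * q by ring]
  -- positivity of the interval integrals
  have hI1nn : 0 ≤ ∫ r in η..ρt, r ^ (κ * (q - 2) + 1 - s * q) := by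
    apply intervalIntegral.integral_nonneg hηρt.le
    intro r hr
    exact Real.rpow_nonneg (le_trans hη0.le hr.1) _
  have hI2nn : 0 ≤ ∫ r in η..ρt, r ^ (κ * (q - 2) - s * q) := by
    apply intervalIntegral.integral_nonneg hηρt.le
    intro r hr
    exact Real.rpow_nonneg (le_trans hη0.le hr.1) _
  -- conclusion
  refine ⟨hFintD, ?_⟩
  have hAβ : A ^ (κ * ((m : ℝ) - 1) / (m : ℝ)) = A ^ (κ * (((m : ℝ) - 1) / (m : ℝ))) := by
    rw [mul_div_assoc]
  rw [hAβ]
  set I₁ : ℝ := ∫ r in η..ρt, r ^ (κ * (q - 2) + 1 - s * q) with hI₁_def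
  set I₂ : ℝ := ∫ r in η..ρt, r ^ (κ * (q - 2) - s * q) with hI₂_def
  have hAe0 : 0 ≤ A ^ (κ * (((m : ℝ) - 1) / (m : ℝ))) := Real.rpow_nonneg hA0.le _
  have key : ∫ z in Ann, G z
      ≤ (K₂ * cn * (1 + K₁) + 1) * (I₁ + A ^ (κ * (((m : ℝ) - 1) / (m : ℝ))) * I₂) := by
    rw [hGAnnval, hc_def]
    linarith only [mul_nonneg (mul_nonneg (mul_nonneg hK₂0 hcn0) hK₁0) hI1nn,
      hI1nn, mul_nonneg (mul_nonneg (mul_nonneg hK₂0 hcn0) hAe0) hI2nn,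
      mul_nonneg hAe0 hI2nn]
  linarith only [hmono1, hmono2, key]
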